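/- Let ψ be the characteristic exponent of a Lévy process with triple (a², ν, γ), and let R ≤ R' be reals with ∫_{|x|>1}(e^{-Rx} + e^{-R'x}) ν(dx) < ∞. Then there exists C > 0 such that for all complex u, v with Im u, Im v, Im u + Im v all in [R, R']: |ψ(u+v) − ψ(u) − ψ(v)| ≤ C (1 + sqrt(|Re ψ(Re u)|)) (1 + sqrt(|Re ψ(Re v)|)). -/

import Mathlib

open MeasureTheory Complex


lemma myexp1 (z : ℂ) :
    ‖Complex.exp z - 1‖ ≤ ‖z‖ * Real.exp (‖z‖) := by
  have hconv : Convex ℝ (Metric.closedBall (0:ℂ) (‖z‖)) := convex_closedBall _ _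
  have h := hconv.norm_image_sub_le_of_norm_hasFDerivWithin_le
    (f := Complex.exp)
    (f' := fun w => ContinuousLinearMap.smulRight (1 : ℂ →L[ℂ] ℂ) (Complex.exp w))
    (fun w _ => (Complex.hasDerivAt_exp w).hasFDerivAt.hasFDerivWithinAt)
    (C := Real.exp (‖z‖)) (y := z) ?_ (Metric.mem_closedBall_self (norm_nonneg z)) ?_
  · simpa [Complex.exp_zero, mul_comm] using h
  · intro w hw
    rw [ContinuousLinearMap.norm_smulRight_apply, norm_one, one_mul, Complex.norm_exp]
    exact Real.exp_le_exp.2 ((Complex.re_le_norm w).trans (by simpa using hw))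
  · simpa using norm_nonneg z

lemma myexp2 (z : ℂ) :
    ‖Complex.exp z - 1 - z‖ ≤ (‖z‖)^2 * Real.exp (‖z‖) := by
  have hconv : Convex ℝ (Metric.closedBall (0:ℂ) (‖z‖)) := convex_closedBall _ _
  have h := hconv.norm_image_sub_le_of_norm_hasFDerivWithin_le
    (f := fun w => Complex.exp w - 1 - w)
    (f' := fun w => ContinuousLinearMap.smulRight (1 : ℂ →L[ℂ] ℂ) (Complex.exp w - 1))
    (fun w _ => by
      have : HasDerivAt (fun w => Complex.exp w - 1 - w) (Complex.exp w - 1) w := by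
        exact (((Complex.hasDerivAt_exp w).sub_const 1).sub (hasDerivAt_id w))
      exact this.hasFDerivAt.hasFDerivWithinAt)
    (C := ‖z‖ * Real.exp (‖z‖)) (y := z) ?_
    (Metric.mem_closedBall_self (norm_nonneg z)) ?_
  · simpa [Complex.exp_zero, pow_two, mul_comm, mul_assoc, mul_left_comm] using h
  · intro w hw
    rw [ContinuousLinearMap.norm_smulRight_apply, norm_one, one_mul]
    have hw' : ‖w‖ ≤ ‖z‖ := by simpa using hw
    calc ‖Complex.exp w - 1‖ ≤ ‖w‖ * Real.exp (‖w‖) := myexp1 w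
    _ ≤ ‖z‖ * Real.exp (‖z‖) :=
      mul_le_mul hw' (Real.exp_le_exp.2 hw') (Real.exp_nonneg _) (norm_nonneg z)
  · simpa using norm_nonneg z

lemma myexpreal (s : ℝ) : |Real.exp s - 1| ≤ |s| * Real.exp |s| := by
  have h := myexp1 (s : ℂ)
  simp only [Complex.norm_real, Real.norm_eq_abs] at h
  calc |Real.exp s - 1| = ‖((Real.exp s - 1 : ℝ) : ℂ)‖ := by rw [Complex.norm_real, Real.norm_eq_abs]
    _ = ‖Complex.exp (s:ℂ) - 1‖ := by rw [Complex.ofReal_sub, Complex.ofReal_exp]; norm_num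
    _ ≤ |s| * Real.exp |s| := h

lemma mysq (θ : ℝ) :
    ‖Complex.exp ((θ:ℂ) * Complex.I) - 1‖ ^ 2 = 2 * (1 - Real.cos θ) := by
  rw [Complex.sq_norm]
  simp [Complex.normSq_apply, Complex.exp_ofReal_mul_I_re, Complex.exp_ofReal_mul_I_im,
    Complex.sub_re, Complex.sub_im]
  nlinarith [Real.sin_sq_add_cos_sq θ]

lemma myphase (θ : ℝ) : ‖Complex.exp ((θ:ℂ) * Complex.I) - 1‖ ≤ |θ| := by
  have h1 : ‖Complex.exp ((θ:ℂ) * Complex.I) - 1‖ ^ 2 ≤ θ^2 := by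
    rw [mysq]; nlinarith [Real.one_sub_sq_div_two_le_cos (x := θ)]
  have := Real.sqrt_le_sqrt h1
  rwa [Real.sqrt_sq (norm_nonneg _), Real.sqrt_sq_eq_abs] at this

noncomputable def fexc (u : ℂ) (x : ℝ) : ℂ :=
  Complex.exp (Complex.I * u * x) - 1 - (if |x| ≤ 1 then Complex.I * u * x else 0)

lemma fexc_meas (u : ℂ) : Measurable (fexc u) := by
  have h1 : Measurable fun x : ℝ => Complex.exp (Complex.I*u*x) :=
    (Complex.continuous_exp.comp (by continuity)).measurable
  have h2 : Measurable fun x : ℝ => (if |x| ≤ 1 then Complex.I*u*(x:ℂ) else 0) :=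
    Measurable.ite (isClosed_le (continuous_abs : Continuous fun x : ℝ => |x|) continuous_const).measurableSet
      (by fun_prop) measurable_const
  exact (h1.sub measurable_const).sub h2

lemma phase_eq (t x : ℝ) : Complex.I * (t:ℂ) * (x:ℂ) = ((t*x:ℝ):ℂ) * Complex.I := by
  push_cast; ring

lemma abs_exp_phase (u : ℂ) (x : ℝ) :
    ‖Complex.exp (Complex.I*u*x)‖ = Real.exp (-(u.im*x)) := by
  rw [Complex.norm_exp]
  congr 1
  simp [Complex.mul_re, Complex.mul_im]

lemma abs_Iux (u : ℂ) (x : ℝ) :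
    ‖Complex.I*u*(x:ℂ)‖ = ‖u‖ * |x| := by
  simp [norm_mul, Complex.norm_real, Real.norm_eq_abs]

lemma gsplit (u : ℂ) (x : ℝ) :
    ‖Complex.exp (Complex.I*u*x) - 1‖ ≤
      |Real.exp (-(u.im*x)) - 1| +
        ‖Complex.exp (((u.re*x:ℝ):ℂ)*Complex.I) - 1‖ := by
  have hd : Complex.exp (Complex.I*u*x)
      = ((Real.exp (-(u.im*x)) : ℝ):ℂ) * Complex.exp (((u.re*x:ℝ):ℂ)*Complex.I) := by
    rw [Complex.ofReal_exp, ← Complex.exp_add]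
    congr 1
    apply Complex.ext <;> simp [Complex.mul_re, Complex.mul_im]
  rw [hd]
  have h2 : ((Real.exp (-(u.im*x)) : ℝ):ℂ) * Complex.exp (((u.re*x:ℝ):ℂ)*Complex.I) - 1
      = (((Real.exp (-(u.im*x)) : ℝ):ℂ) - 1) * Complex.exp (((u.re*x:ℝ):ℂ)*Complex.I)
        + (Complex.exp (((u.re*x:ℝ):ℂ)*Complex.I) - 1) := by ring
  rw [h2]
  refine (norm_add_le _ _).trans ?_
  rw [norm_mul, Complex.norm_exp_ofReal_mul_I, mul_one,
    show ((Real.exp (-(u.im*x)) : ℝ):ℂ) - 1 = ((Real.exp (-(u.im*x)) - 1 : ℝ):ℂ) by push_cast; ring,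
    Complex.norm_real, Real.norm_eq_abs]

noncomputable def gphi (u : ℂ) (x : ℝ) : ℝ := ‖Complex.exp (Complex.I*u*x) - 1‖

lemma gphi_cont (u : ℂ) : Continuous (gphi u) :=
  continuous_norm.comp ((Complex.continuous_exp.comp (by continuity)).sub continuous_const)

lemma gphi_nonneg (u : ℂ) (x : ℝ) : 0 ≤ gphi u x := norm_nonneg _

set_option maxHeartbeats 2000000 in
/-- Lemma A.4 of the paper: on the strip `Im u ∈ [R,R']`,
`|ψ(u+v) − ψ(u) − ψ(v)| ≤ C(1+√|Re ψ(Re u)|)(1+√|Re ψ(Re v)|)`. -/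
theorem stmt9 (a γ R R' : ℝ) (hRR : R ≤ R') (ν : Measure ℝ) (hν0 : ν {0} = 0)
    (hνint : Integrable (fun x => min (x ^ 2) 1) ν)
    (hνexp : Integrable (fun x => Real.exp (-R * x) + Real.exp (-R' * x))
      (ν.restrict {x : ℝ | 1 < |x|}))
    (ψ : ℂ → ℂ)
    (hψ : ∀ u : ℂ, u.im ∈ Set.Icc R R' → ψ u =
      -(a:ℂ) ^ 2 * u ^ 2 / 2 + Complex.I * γ * u +
        ∫ x : ℝ, (Complex.exp (Complex.I * u * x) - 1 -
          (if |x| ≤ 1 then Complex.I * u * x else 0)) ∂ν)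
    (hψreal : ∀ t : ℝ, ψ t =
      -(a:ℂ) ^ 2 * (t:ℂ) ^ 2 / 2 + Complex.I * γ * t +
        ∫ x : ℝ, (Complex.exp (Complex.I * t * x) - 1 -
          (if |x| ≤ 1 then Complex.I * t * x else 0)) ∂ν) :
    ∃ C > (0:ℝ), ∀ u v : ℂ, u.im ∈ Set.Icc R R' → v.im ∈ Set.Icc R R' →
      u.im + v.im ∈ Set.Icc R R' →
      ‖ψ (u + v) - ψ u - ψ v‖ ≤
        C * (1 + Real.sqrt |(ψ (u.re : ℂ)).re|) * (1 + Real.sqrt |(ψ (v.re : ℂ)).re|) := by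
  classical
  have hψ' : ∀ u : ℂ, u.im ∈ Set.Icc R R' → ψ u =
      -(a:ℂ) ^ 2 * u ^ 2 / 2 + Complex.I * γ * u + ∫ x, fexc u x ∂ν := hψ
  have hψreal' : ∀ t : ℝ, ψ t =
      -(a:ℂ) ^ 2 * (t:ℂ) ^ 2 / 2 + Complex.I * γ * t + ∫ x, fexc (t:ℂ) x ∂ν := hψreal
  set M : ℝ := max |R| |R'| with hMdef
  have hM0 : 0 ≤ M := le_trans (abs_nonneg R) (le_max_left _ _)
  have habs_im : ∀ b ∈ Set.Icc R R', |b| ≤ M := by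
    intro b hb
    rw [abs_le]
    constructor
    · calc -M ≤ -|R| := neg_le_neg (le_max_left _ _)
        _ ≤ R := neg_abs_le R
        _ ≤ b := hb.1
    · exact hb.2.trans ((le_abs_self R').trans (le_max_right _ _))
  have hs : MeasurableSet {x : ℝ | |x| ≤ 1} :=
    (isClosed_le (continuous_abs : Continuous fun x : ℝ => |x|) continuous_const).measurableSet
  have hsc : {x : ℝ | |x| ≤ 1}ᶜ = {x : ℝ | 1 < |x|} := by ext x; simp [not_le]
  have hscm : MeasurableSet {x : ℝ | 1 < |x|} := by rw [← hsc]; exact hs.compl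
  have hmin_nonneg : ∀ x : ℝ, 0 ≤ min (x^2) 1 := fun x => le_min (sq_nonneg x) one_pos.le
  have hmin_one : ∀ x : ℝ, 1 < |x| → min (x^2) 1 = 1 := by
    intro x hx
    exact min_eq_right (by nlinarith [_root_.sq_abs x, abs_nonneg x])
  have hmin_sq : ∀ x : ℝ, |x| ≤ 1 → min (x^2) 1 = x^2 := by
    intro x hx
    exact min_eq_left (by nlinarith [_root_.sq_abs x, abs_nonneg x])
  -- the exponential bound on the strip
  have hexp_convex : ∀ b ∈ Set.Icc R R', ∀ x : ℝ,
      Real.exp (-(b*x)) ≤ Real.exp (-R*x) + Real.exp (-R'*x) := by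
    intro b hb x
    rcases le_or_gt 0 x with hx | hx
    · have : -(b*x) ≤ -R*x := by nlinarith [hb.1]
      calc Real.exp (-(b*x)) ≤ Real.exp (-R*x) := Real.exp_le_exp.2 this
        _ ≤ _ := le_add_of_nonneg_right (Real.exp_pos _).le
    · have : -(b*x) ≤ -R'*x := by nlinarith [hb.2]
      calc Real.exp (-(b*x)) ≤ Real.exp (-R'*x) := Real.exp_le_exp.2 this
        _ ≤ _ := le_add_of_nonneg_left (Real.exp_pos _).le
  -- finiteness of ν on {1 < |x|}
  have hνfin : ν {x : ℝ | 1 < |x|} < ⊤ := by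
    have h1 : IntegrableOn (fun _ : ℝ => (1:ℝ)) {x : ℝ | 1 < |x|} ν := by
      refine (hνint.integrableOn (s := {x : ℝ | 1 < |x|})).mono' aestronglyMeasurable_const ?_
      rw [ae_restrict_iff' hscm]
      refine ae_of_all _ fun x hx => ?_
      rw [Real.norm_eq_abs, abs_one, hmin_one x hx]
    rcases (integrableOn_const_iff (C := (1:ℝ))).mp h1 with h | h
    · norm_num at h
    · exact h
  -- integrability of fexc on the strip
  have hI1 : ∀ u : ℂ, u.im ∈ Set.Icc R R' → Integrable (fexc u) ν := by
    intro u hu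
    set Cu : ℝ := (‖u‖)^2 * Real.exp (‖u‖) + 1 with hCudef
    have hCu1 : 1 ≤ Cu := le_add_of_nonneg_left (by positivity)
    have hbound : Integrable (fun x => Cu * min (x^2) 1 +
        Set.indicator {x : ℝ | 1 < |x|}
          (fun x => Real.exp (-R*x) + Real.exp (-R'*x)) x) ν :=
      (hνint.const_mul Cu).add ((integrable_indicator_iff hscm).mpr hνexp)
    refine hbound.mono' ((fexc_meas u).aestronglyMeasurable) (ae_of_all _ fun x => ?_)
    by_cases hx : |x| ≤ 1
    · have hind : Set.indicator {x : ℝ | 1 < |x|}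
          (fun x => Real.exp (-R*x) + Real.exp (-R'*x)) x = 0 :=
        Set.indicator_of_notMem (by simpa using hx) _
      rw [hind, add_zero, hmin_sq x hx]
      have h1 : fexc u x = Complex.exp (Complex.I*u*x) - 1 - Complex.I*u*x := by
        simp [fexc, hx]
      rw [h1]
      calc ‖Complex.exp (Complex.I*u*x) - 1 - Complex.I*u*x‖
          ≤ (‖Complex.I*u*(x:ℂ)‖)^2 * Real.exp (‖Complex.I*u*(x:ℂ)‖) :=
            myexp2 _
        _ = (‖u‖ * |x|)^2 * Real.exp (‖u‖ * |x|) := by rw [abs_Iux]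
        _ ≤ (‖u‖)^2 * Real.exp (‖u‖) * x^2 := by
            have h2 : ‖u‖ * |x| ≤ ‖u‖ :=
              mul_le_of_le_one_right (norm_nonneg u) hx
            have h3 : Real.exp (‖u‖ * |x|) ≤ Real.exp (‖u‖) :=
              Real.exp_le_exp.2 h2
            have h4 : (‖u‖ * |x|)^2 = (‖u‖)^2 * x^2 := by
              rw [mul_pow, _root_.sq_abs]
            rw [h4]
            nlinarith [sq_nonneg x, norm_nonneg u, sq_nonneg (‖u‖),
              Real.exp_pos (‖u‖ * |x|)]
        _ ≤ Cu * x^2 := by nlinarith [sq_nonneg x]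
    · push_neg at hx
      have hind : Set.indicator {x : ℝ | 1 < |x|}
          (fun x => Real.exp (-R*x) + Real.exp (-R'*x)) x
          = Real.exp (-R*x) + Real.exp (-R'*x) := Set.indicator_of_mem (by simpa using hx) _
      rw [hind, hmin_one x hx]
      have h1 : fexc u x = Complex.exp (Complex.I*u*x) - 1 := by
        simp [fexc, not_le.mpr hx]
      rw [h1]
      calc ‖Complex.exp (Complex.I*u*x) - 1‖
          ≤ ‖Complex.exp (Complex.I*u*x)‖ + 1 := by
            refine (norm_sub_le _ _).trans ?_
            simp
        _ = Real.exp (-(u.im*x)) + 1 := by rw [abs_exp_phase]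
        _ ≤ (Real.exp (-R*x) + Real.exp (-R'*x)) + 1 :=
            add_le_add_left (hexp_convex u.im hu x) 1
        _ ≤ Cu * 1 + (Real.exp (-R*x) + Real.exp (-R'*x)) := by nlinarith
  -- integrability of fexc for real parameter
  have hI3 : ∀ t : ℝ, Integrable (fexc (t:ℂ)) ν := by
    intro t
    have hbound : Integrable (fun x => (t^2 * Real.exp |t| + 2) * min (x^2) 1) ν :=
      hνint.const_mul _
    refine hbound.mono' ((fexc_meas _).aestronglyMeasurable) (ae_of_all _ fun x => ?_)
    by_cases hx : |x| ≤ 1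
    · rw [hmin_sq x hx]
      have h1 : fexc (t:ℂ) x = Complex.exp (Complex.I*t*x) - 1 - Complex.I*t*x := by
        simp [fexc, hx]
      rw [h1]
      calc ‖Complex.exp (Complex.I*(t:ℂ)*x) - 1 - Complex.I*(t:ℂ)*x‖
          ≤ (‖Complex.I*(t:ℂ)*(x:ℂ)‖)^2 *
              Real.exp (‖Complex.I*(t:ℂ)*(x:ℂ)‖) := myexp2 _
        _ = (‖(t:ℂ)‖ * |x|)^2 * Real.exp (‖(t:ℂ)‖ * |x|) := by rw [abs_Iux]
        _ = (|t| * |x|)^2 * Real.exp (|t| * |x|) := by rw [Complex.norm_real, Real.norm_eq_abs]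
        _ ≤ t^2 * Real.exp |t| * x^2 := by
            have h2 : |t| * |x| ≤ |t| := mul_le_of_le_one_right (abs_nonneg t) hx
            have h3 : Real.exp (|t| * |x|) ≤ Real.exp |t| := Real.exp_le_exp.2 h2
            have h4 : (|t| * |x|)^2 = t^2 * x^2 := by rw [mul_pow, _root_.sq_abs, _root_.sq_abs]
            rw [h4]
            nlinarith [sq_nonneg x, sq_nonneg t, Real.exp_pos (|t| * |x|)]
        _ ≤ (t^2 * Real.exp |t| + 2) * x^2 := by nlinarith [sq_nonneg x]
    · push_neg at hx
      rw [hmin_one x hx]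
      have h1 : fexc (t:ℂ) x = Complex.exp (Complex.I*t*x) - 1 := by
        simp [fexc, not_le.mpr hx]
      rw [h1]
      calc ‖Complex.exp (Complex.I*(t:ℂ)*x) - 1‖
          ≤ ‖Complex.exp (Complex.I*(t:ℂ)*x)‖ + 1 := by
            refine (norm_sub_le _ _).trans ?_
            simp
        _ = Real.exp (-((t:ℂ).im*x)) + 1 := by rw [abs_exp_phase]
        _ = 2 := by norm_num
        _ ≤ (t^2 * Real.exp |t| + 2) * 1 := by nlinarith [sq_nonneg t, Real.exp_pos |t|]
  -- integrability of 1 - cos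
  have hIcos : ∀ t : ℝ, Integrable (fun x => 1 - Real.cos (t*x)) ν := by
    intro t
    have hbound : Integrable (fun x => (t^2/2 + 2) * min (x^2) 1) ν := hνint.const_mul _
    refine hbound.mono' ((continuous_const.sub (Real.continuous_cos.comp (continuous_const.mul continuous_id))).aestronglyMeasurable) (ae_of_all _ fun x => ?_)
    rw [Real.norm_eq_abs, _root_.abs_of_nonneg (by nlinarith [Real.cos_le_one (t*x)])]
    by_cases hx : |x| ≤ 1
    · rw [hmin_sq x hx]
      have h1 : 1 - Real.cos (t*x) ≤ (t*x)^2/2 := by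
        nlinarith [Real.one_sub_sq_div_two_le_cos (x := t*x)]
      nlinarith [sq_nonneg x, sq_nonneg t, sq_nonneg (t*x), mul_pow t x 2]
    · push_neg at hx
      rw [hmin_one x hx]
      nlinarith [Real.neg_one_le_cos (t*x), sq_nonneg t]
  have hcos_nonneg : ∀ t : ℝ, 0 ≤ ∫ x, (1 - Real.cos (t*x)) ∂ν := by
    intro t
    refine integral_nonneg fun x => ?_
    simp only [Pi.zero_apply]
    nlinarith [Real.cos_le_one (t*x)]
  -- real part of ψ at real points
  have hRe : ∀ t : ℝ, (ψ (t:ℂ)).re = -(a^2*t^2/2 + ∫ x, (1 - Real.cos (t*x)) ∂ν) := by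
    intro t
    have hfre : ∀ x : ℝ, (fexc (t:ℂ) x).re = -(1 - Real.cos (t*x)) := by
      intro x
      have hre1 : (Complex.exp (Complex.I*(t:ℂ)*(x:ℂ))).re = Real.cos (t*x) := by
        rw [phase_eq t x, Complex.exp_ofReal_mul_I_re]
      have hre2 : (Complex.I*(t:ℂ)*(x:ℂ)).re = 0 := by
        rw [phase_eq t x]; simp
      simp only [fexc, Complex.sub_re, hre1, hre2]
      by_cases hx : |x| ≤ 1 <;> simp [hx] <;> ring
    have h2 : (∫ x, fexc (t:ℂ) x ∂ν).re = - ∫ x, (1 - Real.cos (t*x)) ∂ν := by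
      have h2a := integral_re (hI3 t)
      simp only [RCLike.re_to_complex] at h2a
      rw [← h2a, ← integral_neg]
      exact integral_congr_ae (ae_of_all _ fun x => hfre x)
    rw [hψreal' t, Complex.add_re, Complex.add_re, h2]
    have h3 : (-(a:ℂ) ^ 2 * (t:ℂ) ^ 2 / 2).re = -(a^2*t^2/2) := by
      rw [show -(a:ℂ) ^ 2 * (t:ℂ) ^ 2 / 2 = ((-(a^2*t^2/2) : ℝ) : ℂ) by push_cast; ring]
      rw [Complex.ofReal_re]
    have h4 : (Complex.I * (γ:ℂ) * (t:ℂ)).re = 0 := by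
      rw [show Complex.I * (γ:ℂ) * (t:ℂ) = ((γ*t : ℝ):ℂ) * Complex.I by push_cast; ring]
      simp
    rw [h3, h4]
    ring
  have hReAbs : ∀ t : ℝ, |(ψ (t:ℂ)).re| = a^2*t^2/2 + ∫ x, (1 - Real.cos (t*x)) ∂ν := by
    intro t
    rw [hRe t, abs_neg, _root_.abs_of_nonneg (by nlinarith [hcos_nonneg t, sq_nonneg (a*t)])]
  -- pointwise product identity
  have hprod : ∀ u v : ℂ, ∀ x : ℝ, fexc (u+v) x - fexc u x - fexc v x
      = (Complex.exp (Complex.I*u*x) - 1) * (Complex.exp (Complex.I*v*x) - 1) := by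
    intro u v x
    simp only [fexc]
    rw [show Complex.I*((u+v):ℂ)*(x:ℂ) = Complex.I*u*x + Complex.I*v*x by ring, Complex.exp_add]
    by_cases hx : |x| ≤ 1 <;> simp [hx] <;> ring
  have hIprod : ∀ u v : ℂ, u.im ∈ Set.Icc R R' → v.im ∈ Set.Icc R R' →
      (u+v).im ∈ Set.Icc R R' →
      Integrable (fun x : ℝ =>
        (Complex.exp (Complex.I*u*x) - 1) * (Complex.exp (Complex.I*v*x) - 1)) ν :=
    fun u v hu hv huv =>
      (((hI1 (u+v) huv).sub (hI1 u hu)).sub (hI1 v hv)).congr (ae_of_all _ fun x => hprod u v x)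
  have hkey : ∀ u v : ℂ, u.im ∈ Set.Icc R R' → v.im ∈ Set.Icc R R' →
      (u+v).im ∈ Set.Icc R R' →
      ψ (u+v) - ψ u - ψ v = -(a:ℂ)^2*u*v +
        ∫ x, (Complex.exp (Complex.I*u*x) - 1) * (Complex.exp (Complex.I*v*x) - 1) ∂ν := by
    intro u v hu hv huv
    have i12 : Integrable (fun x => fexc (u+v) x - fexc u x) ν :=
      (hI1 (u+v) huv).sub (hI1 u hu)
    have h3 : ∫ x, (Complex.exp (Complex.I*u*x) - 1) * (Complex.exp (Complex.I*v*x) - 1) ∂ν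
        = (∫ x, fexc (u+v) x ∂ν) - (∫ x, fexc u x ∂ν) - (∫ x, fexc v x ∂ν) := by
      calc ∫ x, (Complex.exp (Complex.I*u*x) - 1) * (Complex.exp (Complex.I*v*x) - 1) ∂ν
          = ∫ x, (fexc (u+v) x - fexc u x - fexc v x) ∂ν :=
            integral_congr_ae (ae_of_all _ fun x => (hprod u v x).symm)
        _ = (∫ x, (fexc (u+v) x - fexc u x) ∂ν) - ∫ x, fexc v x ∂ν :=
            integral_sub i12 (hI1 v hv)
        _ = ((∫ x, fexc (u+v) x ∂ν) - ∫ x, fexc u x ∂ν) - ∫ x, fexc v x ∂ν := by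
            rw [integral_sub (hI1 (u+v) huv) (hI1 u hu)]
    rw [hψ' (u+v) huv, hψ' u hu, hψ' v hv]
    linear_combination -h3
  -- tail
  set Iexp : ℝ := ∫ x in {x : ℝ | 1 < |x|}, (Real.exp (-R*x) + Real.exp (-R'*x)) ∂ν with hIexpdef
  have hIexp0 : 0 ≤ Iexp := integral_nonneg fun x => by positivity
  set Ct : ℝ := 3 * Iexp + (ν {x : ℝ | 1 < |x|}).toReal with hCtdef
  have hCt0 : 0 ≤ Ct := by positivity
  have htail : ∀ u v : ℂ, u.im ∈ Set.Icc R R' → v.im ∈ Set.Icc R R' →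
      (u+v).im ∈ Set.Icc R R' →
      ∫ x in {x : ℝ | |x| ≤ 1}ᶜ, gphi u x * gphi v x ∂ν ≤ Ct := by
    intro u v hu hv huv
    have hg : IntegrableOn (fun x => 3*(Real.exp (-R*x) + Real.exp (-R'*x)) + 1)
        {x : ℝ | |x| ≤ 1}ᶜ ν := by
      rw [hsc]
      exact (hνexp.const_mul 3).add (integrableOn_const hνfin.ne)
    have hb : ∀ x : ℝ, gphi u x * gphi v x ≤ 3*(Real.exp (-R*x) + Real.exp (-R'*x)) + 1 := by
      intro x
      have h1 : gphi u x ≤ Real.exp (-(u.im*x)) + 1 := by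
        refine (norm_sub_le _ _).trans ?_
        rw [abs_exp_phase]
        simp
      have h2 : gphi v x ≤ Real.exp (-(v.im*x)) + 1 := by
        refine (norm_sub_le _ _).trans ?_
        rw [abs_exp_phase]
        simp
      have hsum : (u+v).im = u.im + v.im := Complex.add_im u v
      have h3 := hexp_convex u.im hu x
      have h4 := hexp_convex v.im hv x
      have h5 := hexp_convex (u.im+v.im) (by rw [← hsum]; exact huv) x
      calc gphi u x * gphi v x
          ≤ (Real.exp (-(u.im*x)) + 1) * (Real.exp (-(v.im*x)) + 1) :=
            mul_le_mul h1 h2 (gphi_nonneg v x) (by positivity)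
        _ = Real.exp (-((u.im+v.im)*x)) + Real.exp (-(u.im*x)) + Real.exp (-(v.im*x)) + 1 := by
            rw [show -((u.im+v.im)*x) = -(u.im*x) + -(v.im*x) by ring, Real.exp_add]
            ring
        _ ≤ 3*(Real.exp (-R*x) + Real.exp (-R'*x)) + 1 := by linarith
    calc ∫ x in {x : ℝ | |x| ≤ 1}ᶜ, gphi u x * gphi v x ∂ν
        ≤ ∫ x in {x : ℝ | |x| ≤ 1}ᶜ, (3*(Real.exp (-R*x) + Real.exp (-R'*x)) + 1) ∂ν :=
          integral_mono_of_nonneg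
            (ae_of_all _ fun x => mul_nonneg (gphi_nonneg u x) (gphi_nonneg v x)) hg
            (ae_of_all _ hb)
      _ = Ct := by
          rw [hsc, integral_add (hνexp.const_mul 3)
            (integrableOn_const hνfin.ne), integral_const_mul, integral_const]
          simp [hCtdef, hIexpdef, Measure.restrict_apply_univ, smul_eq_mul, measureReal_def]
  -- head
  set J : ℝ := ∫ x, min (x^2) 1 ∂ν with hJdef
  have hJ0 : 0 ≤ J := by
    refine integral_nonneg fun x => ?_
    simp only [Pi.zero_apply]
    exact hmin_nonneg x
  set A : ℝ := 2*(M*Real.exp M)^2*J with hAdef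
  have hA0 : 0 ≤ A := by positivity
  have hgphi_sq : ∀ w : ℂ, w.im ∈ Set.Icc R R' → ∀ x : ℝ, |x| ≤ 1 →
      (gphi w x)^2 ≤ 2*(M*Real.exp M)^2 * min (x^2) 1 + 4*(1 - Real.cos (w.re*x)) := by
    intro w hw x hx
    set p : ℝ := |Real.exp (-(w.im*x)) - 1| with hpdef
    set q : ℝ := ‖Complex.exp (((w.re*x:ℝ):ℂ)*Complex.I) - 1‖ with hqdef
    have hp0 : 0 ≤ p := abs_nonneg _
    have hq0 : 0 ≤ q := norm_nonneg _
    have hp : p ≤ (M*Real.exp M) * |x| := by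
      calc p ≤ |(-(w.im*x))| * Real.exp |(-(w.im*x))| := myexpreal _
        _ ≤ (M*Real.exp M) * |x| := by
          have h1 : |(-(w.im*x))| = |w.im| * |x| := by rw [abs_neg, abs_mul]
          have h2 : |w.im| ≤ M := habs_im w.im hw
          have h3 : |w.im| * |x| ≤ M := by nlinarith [abs_nonneg x, abs_nonneg w.im]
          have h4 := Real.exp_le_exp.2 h3
          rw [h1]
          calc |w.im| * |x| * Real.exp (|w.im| * |x|)
              ≤ M * |x| * Real.exp M :=
                mul_le_mul (mul_le_mul_of_nonneg_right h2 (abs_nonneg x)) h4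
                  (Real.exp_pos _).le (by positivity)
            _ = M * Real.exp M * |x| := by ring
    have hq : q^2 = 2*(1 - Real.cos (w.re*x)) := mysq _
    have hsp := gsplit w x
    have hsp' : gphi w x ≤ p + q := by
      rw [hpdef, hqdef]
      exact hsp
    have h6 : (gphi w x)^2 ≤ (p + q)^2 :=
      pow_le_pow_left₀ (gphi_nonneg w x) hsp' 2
    have h7 : (p+q)^2 ≤ 2*p^2 + 2*q^2 := by nlinarith [sq_nonneg (p - q)]
    have h8 : p^2 ≤ (M*Real.exp M)^2 * x^2 := by
      have h9 : p^2 ≤ ((M*Real.exp M) * |x|)^2 := pow_le_pow_left₀ hp0 hp 2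
      calc p^2 ≤ ((M*Real.exp M) * |x|)^2 := h9
        _ = (M*Real.exp M)^2 * x^2 := by rw [mul_pow, _root_.sq_abs]
    rw [hmin_sq x hx]
    linarith
  have hIsq : ∀ w : ℂ, w.im ∈ Set.Icc R R' →
      IntegrableOn (fun x => (gphi w x)^2) {x : ℝ | |x| ≤ 1} ν := by
    intro w hw
    have hD : Integrable
        (fun x => 2*(M*Real.exp M)^2 * min (x^2) 1 + 4*(1 - Real.cos (w.re*x))) ν :=
      (hνint.const_mul _).add ((hIcos w.re).const_mul 4)
    refine (hD.integrableOn).mono' (((gphi_cont w).pow 2).aestronglyMeasurable) ?_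
    rw [ae_restrict_iff' hs]
    refine ae_of_all _ fun x hx => ?_
    rw [Real.norm_eq_abs, _root_.abs_of_nonneg (sq_nonneg _)]
    exact hgphi_sq w hw x hx
  have hheadInt : ∀ w : ℂ, w.im ∈ Set.Icc R R' →
      ∫ x in {x : ℝ | |x| ≤ 1}, (gphi w x)^2 ∂ν ≤ A + 4*|(ψ ((w.re : ℝ):ℂ)).re| := by
    intro w hw
    have hD : Integrable
        (fun x => 2*(M*Real.exp M)^2 * min (x^2) 1 + 4*(1 - Real.cos (w.re*x))) ν :=
      (hνint.const_mul _).add ((hIcos w.re).const_mul 4)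
    have hDnn : ∀ x : ℝ, 0 ≤ 2*(M*Real.exp M)^2 * min (x^2) 1 + 4*(1 - Real.cos (w.re*x)) := by
      intro x
      have := hmin_nonneg x
      nlinarith [Real.cos_le_one (w.re*x)]
    calc ∫ x in {x : ℝ | |x| ≤ 1}, (gphi w x)^2 ∂ν
        ≤ ∫ x in {x : ℝ | |x| ≤ 1},
            (2*(M*Real.exp M)^2 * min (x^2) 1 + 4*(1 - Real.cos (w.re*x))) ∂ν :=
          integral_mono_of_nonneg (ae_of_all _ fun x => sq_nonneg _) hD.integrableOn
            (by exact (ae_restrict_iff' hs).mpr (ae_of_all _ fun x hx => hgphi_sq w hw x hx))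
      _ ≤ ∫ x, (2*(M*Real.exp M)^2 * min (x^2) 1 + 4*(1 - Real.cos (w.re*x))) ∂ν :=
          integral_mono_measure Measure.restrict_le_self
            (ae_of_all _ fun x => hDnn x) hD
      _ = 2*(M*Real.exp M)^2*J + 4*(∫ x, (1 - Real.cos (w.re*x)) ∂ν) := by
          rw [integral_add (hνint.const_mul _) ((hIcos w.re).const_mul 4),
            integral_const_mul, integral_const_mul, hJdef]
      _ ≤ A + 4*|(ψ ((w.re : ℝ):ℂ)).re| := by
          rw [hReAbs w.re, hAdef]
          nlinarith [hcos_nonneg w.re, sq_nonneg (a*w.re)]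
  -- Cauchy-Schwarz on the head
  have hCS : ∀ u v : ℂ, u.im ∈ Set.Icc R R' → v.im ∈ Set.Icc R R' →
      ∫ x in {x : ℝ | |x| ≤ 1}, gphi u x * gphi v x ∂ν ≤
        Real.sqrt (∫ x in {x : ℝ | |x| ≤ 1}, (gphi u x)^2 ∂ν) *
        Real.sqrt (∫ x in {x : ℝ | |x| ≤ 1}, (gphi v x)^2 ∂ν) := by
    intro u v hu hv
    have hpq : Real.HolderConjugate 2 2 := Real.HolderConjugate.two_two
    have h2 : (ENNReal.ofReal (2:ℝ)) = 2 := by norm_num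
    have hmem : ∀ w : ℂ, w.im ∈ Set.Icc R R' →
        MemLp (gphi w) (ENNReal.ofReal (2:ℝ)) (ν.restrict {x : ℝ | |x| ≤ 1}) := by
      intro w hw
      rw [h2]
      exact (memLp_two_iff_integrable_sq ((gphi_cont w).aestronglyMeasurable)).mpr (hIsq w hw)
    have h := integral_mul_le_Lp_mul_Lq_of_nonneg hpq
      (ae_of_all _ fun x => gphi_nonneg u x) (ae_of_all _ fun x => gphi_nonneg v x)
      (hmem u hu) (hmem v hv)
    simp_rw [show ∀ y : ℝ, y ^ (2:ℝ) = y^2 from fun y => by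
      rw [show (2:ℝ) = ((2:ℕ):ℝ) by norm_num, Real.rpow_natCast]] at h
    rw [← Real.sqrt_eq_rpow, ← Real.sqrt_eq_rpow] at h
    exact h
  have hsqrt : ∀ A' B : ℝ, 0 ≤ A' → 0 ≤ B →
      Real.sqrt (A' + 4*B) ≤ Real.sqrt A' + 2*Real.sqrt B := by
    intro A' B hA' hB
    have h := Real.sqrt_le_sqrt (show A' + 4*B ≤ (Real.sqrt A' + 2*Real.sqrt B)^2 by
      nlinarith [Real.sq_sqrt hA', Real.sq_sqrt hB, Real.sqrt_nonneg A', Real.sqrt_nonneg B])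
    rwa [Real.sqrt_sq (by positivity)] at h
  -- constants
  set c1 : ℝ := Real.sqrt 2 + |a| * M with hc1def
  have hc10 : 0 ≤ c1 := by positivity
  set c2 : ℝ := Real.sqrt A + 2 with hc2def
  have hc20 : 0 ≤ c2 := by positivity
  refine ⟨c1^2 + c2^2 + Ct + 1, by positivity, ?_⟩
  intro u v hu hv huvim
  have huv' : (u+v).im ∈ Set.Icc R R' := by rw [Complex.add_im]; exact huvim
  set α := |(ψ ((u.re : ℝ):ℂ)).re| with hαdef
  set β := |(ψ ((v.re : ℝ):ℂ)).re| with hβdef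
  have hα0 : 0 ≤ α := abs_nonneg _
  have hβ0 : 0 ≤ β := abs_nonneg _
  set P := 1 + Real.sqrt α with hPdef
  set Q := 1 + Real.sqrt β with hQdef
  have hP1 : 1 ≤ P := le_add_of_nonneg_right (Real.sqrt_nonneg _)
  have hQ1 : 1 ≤ Q := le_add_of_nonneg_right (Real.sqrt_nonneg _)
  have hP0 : 0 ≤ P := le_trans zero_le_one hP1
  have hQ0 : 0 ≤ Q := le_trans zero_le_one hQ1
  -- term 1 bound
  have hfactor : ∀ w : ℂ, w.im ∈ Set.Icc R R' →
      |a| * ‖w‖ ≤ c1 * (1 + Real.sqrt |(ψ ((w.re : ℝ):ℂ)).re|) := by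
    intro w hw
    have h1 : ‖w‖ ≤ |w.re| + |w.im| := Complex.norm_le_abs_re_add_abs_im w
    have h3 : a^2*w.re^2/2 ≤ |(ψ ((w.re : ℝ):ℂ)).re| := by
      rw [hReAbs w.re]
      nlinarith [hcos_nonneg w.re]
    have h2 : |a| * |w.re| ≤ Real.sqrt 2 * Real.sqrt |(ψ ((w.re : ℝ):ℂ)).re| := by
      have h4 : |a| * |w.re| = Real.sqrt (a^2*w.re^2) := by
        rw [show a^2*w.re^2 = (a*w.re)^2 by ring, Real.sqrt_sq_eq_abs, abs_mul]
      rw [h4, ← Real.sqrt_mul (by norm_num : (0:ℝ) ≤ 2)]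
      exact Real.sqrt_le_sqrt (by linarith)
    have h5 : |a| * |w.im| ≤ |a| * M :=
      mul_le_mul_of_nonneg_left (habs_im w.im hw) (abs_nonneg a)
    have h6 : |a| * ‖w‖ ≤ |a| * |w.re| + |a| * |w.im| := by
      nlinarith [abs_nonneg a]
    rw [hc1def]
    calc |a| * ‖w‖ ≤ Real.sqrt 2 * Real.sqrt |(ψ ((w.re : ℝ):ℂ)).re| + |a| * M := by
          linarith
      _ ≤ (Real.sqrt 2 + |a| * M) * (1 + Real.sqrt |(ψ ((w.re : ℝ):ℂ)).re|) := by
          nlinarith [mul_nonneg (mul_nonneg (abs_nonneg a) hM0)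
              (Real.sqrt_nonneg |(ψ ((w.re : ℝ):ℂ)).re|),
            mul_nonneg (Real.sqrt_nonneg (2:ℝ)) (Real.sqrt_nonneg |(ψ ((w.re : ℝ):ℂ)).re|),
            Real.sqrt_nonneg (2:ℝ), mul_nonneg (abs_nonneg a) hM0]
  have hterm1 : ‖-(a:ℂ)^2*u*v‖ ≤ c1^2 * (P*Q) := by
    have habsval : ‖-(a:ℂ)^2*u*v‖
        = (|a| * ‖u‖) * (|a| * ‖v‖) := by
      rw [show -(a:ℂ)^2*u*v = -(((a:ℂ)^2*u)*v) by ring, norm_neg, norm_mul, norm_mul,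
        norm_pow, Complex.norm_real, Real.norm_eq_abs]
      ring
    rw [habsval]
    have hau := hfactor u hu
    have hav := hfactor v hv
    rw [← hαdef] at hau
    rw [← hβdef] at hav
    calc (|a| * ‖u‖) * (|a| * ‖v‖) ≤ (c1*P)*(c1*Q) :=
        mul_le_mul hau hav (by positivity) (by positivity)
      _ = c1^2*(P*Q) := by ring
  -- integrable norm product
  have hnormint : Integrable (fun x => gphi u x * gphi v x) ν := by
    refine (hIprod u v hu hv huv').norm.congr (ae_of_all _ fun x => ?_)
    simp only [norm_mul, gphi]
  have hsplitI : ∫ x, gphi u x * gphi v x ∂ν =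
      (∫ x in {x : ℝ | |x| ≤ 1}, gphi u x * gphi v x ∂ν) +
      (∫ x in {x : ℝ | |x| ≤ 1}ᶜ, gphi u x * gphi v x ∂ν) :=
    (integral_add_compl hs hnormint).symm
  have hhead : ∫ x in {x : ℝ | |x| ≤ 1}, gphi u x * gphi v x ∂ν ≤ c2^2 * (P*Q) := by
    have h1 := hCS u v hu hv
    have h2 : Real.sqrt (∫ x in {x : ℝ | |x| ≤ 1}, (gphi u x)^2 ∂ν) ≤ c2 * P := by
      calc Real.sqrt (∫ x in {x : ℝ | |x| ≤ 1}, (gphi u x)^2 ∂ν)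
          ≤ Real.sqrt (A + 4*α) := Real.sqrt_le_sqrt (hheadInt u hu)
        _ ≤ Real.sqrt A + 2*Real.sqrt α := hsqrt A α hA0 hα0
        _ ≤ c2 * P := by
            rw [hc2def, hPdef]
            nlinarith [Real.sqrt_nonneg A, Real.sqrt_nonneg α]
    have h3 : Real.sqrt (∫ x in {x : ℝ | |x| ≤ 1}, (gphi v x)^2 ∂ν) ≤ c2 * Q := by
      calc Real.sqrt (∫ x in {x : ℝ | |x| ≤ 1}, (gphi v x)^2 ∂ν)
          ≤ Real.sqrt (A + 4*β) := Real.sqrt_le_sqrt (hheadInt v hv)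
        _ ≤ Real.sqrt A + 2*Real.sqrt β := hsqrt A β hA0 hβ0
        _ ≤ c2 * Q := by
            rw [hc2def, hQdef]
            nlinarith [Real.sqrt_nonneg A, Real.sqrt_nonneg β]
    calc ∫ x in {x : ℝ | |x| ≤ 1}, gphi u x * gphi v x ∂ν
        ≤ Real.sqrt (∫ x in {x : ℝ | |x| ≤ 1}, (gphi u x)^2 ∂ν) *
          Real.sqrt (∫ x in {x : ℝ | |x| ≤ 1}, (gphi v x)^2 ∂ν) := h1
      _ ≤ (c2*P)*(c2*Q) :=
          mul_le_mul h2 h3 (Real.sqrt_nonneg _) (by positivity)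
      _ = c2^2*(P*Q) := by ring
  have hintabs : ‖∫ x, (Complex.exp (Complex.I*u*x) - 1) *
      (Complex.exp (Complex.I*v*x) - 1) ∂ν‖ ≤ ∫ x, gphi u x * gphi v x ∂ν := by
    have h := norm_integral_le_integral_norm
      (fun x : ℝ => (Complex.exp (Complex.I*u*x) - 1) * (Complex.exp (Complex.I*v*x) - 1))
      (μ := ν)
    refine h.trans (le_of_eq (integral_congr_ae (ae_of_all _ fun x => ?_)))
    simp only [norm_mul, gphi]
  have hPQ1 : 1 ≤ P*Q := by nlinarith
  calc ‖ψ (u+v) - ψ u - ψ v‖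
      = ‖-(a:ℂ)^2*u*v + ∫ x, (Complex.exp (Complex.I*u*x) - 1) *
          (Complex.exp (Complex.I*v*x) - 1) ∂ν‖ := by rw [hkey u v hu hv huv']
    _ ≤ ‖-(a:ℂ)^2*u*v‖ + ‖∫ x, (Complex.exp (Complex.I*u*x) - 1) *
          (Complex.exp (Complex.I*v*x) - 1) ∂ν‖ := norm_add_le _ _
    _ ≤ c1^2 * (P*Q) + ∫ x, gphi u x * gphi v x ∂ν := add_le_add hterm1 hintabs
    _ = c1^2 * (P*Q) + ((∫ x in {x : ℝ | |x| ≤ 1}, gphi u x * gphi v x ∂ν) +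
        (∫ x in {x : ℝ | |x| ≤ 1}ᶜ, gphi u x * gphi v x ∂ν)) := by rw [hsplitI]
    _ ≤ c1^2 * (P*Q) + (c2^2 * (P*Q) + Ct) :=
        add_le_add_right (add_le_add hhead (htail u v hu hv huv')) _
    _ ≤ (c1^2 + c2^2 + Ct + 1) * P * Q := by nlinarith [sq_nonneg c1, sq_nonneg c2]
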